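/- The constant D = 1 is the smallest constant such that D·[(φ(a+b) − φ(b−a))/(2a) − (φ(a+b) + φ(b−a))/(2b)] ≥ φ(b)/b − φ(a)/a holds for all 0 < a < b and all φ of the form φ(x) = x·r(x) with r even, nondecreasing convex on (0,∞); indeed, taking r(x) = |x| forces D ≥ 1. -/

import Mathlib

theorem stmt_5 :
    IsLeast {D : ℝ | ∀ r : ℝ → ℝ, Continuous r → (∀ x : ℝ, r (-x) = r x) →
      MonotoneOn r (Set.Ioi 0) → ConvexOn ℝ (Set.Ioi 0) r →
      ∀ a b : ℝ, 0 < a → a < b →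
        D * (((a + b) * r (a + b) - (b - a) * r (b - a)) / (2 * a)
            - ((a + b) * r (a + b) + (b - a) * r (b - a)) / (2 * b))
          ≥ (b * r b) / b - (a * r a) / a} 1 := by
  constructor
  · intro r hcont heven hmono hconv a b ha hab
    have hb : 0 < b := ha.trans hab
    have hd : 0 < b - a := sub_pos.2 hab
    have hc : 0 < a + b := by linarith
    have ma : a ∈ Set.Ioi (0:ℝ) := ha
    have mb : b ∈ Set.Ioi (0:ℝ) := hb
    have mc : a + b ∈ Set.Ioi (0:ℝ) := hc
    have md : b - a ∈ Set.Ioi (0:ℝ) := hd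
    have h1 : (r b - r a) / (b - a) ≤ (r (a + b) - r b) / ((a + b) - b) :=
      hconv.slope_mono_adjacent ma mc hab (by linarith)
    have hab' : (a + b) - b = a := by ring
    rw [hab', div_le_div_iff₀ hd ha] at h1
    have mono1 : r (b - a) ≤ r (a + b) := hmono md mc (by linarith)
    have mono2 : r a ≤ r b := hmono ma mb hab.le
    rw [mul_div_cancel_left₀ _ hb.ne', mul_div_cancel_left₀ _ ha.ne', one_mul, ge_iff_le,
      div_sub_div _ _ (by positivity : (2*a) ≠ 0) (by positivity : (2*b) ≠ 0),
      le_div_iff₀ (by positivity)]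
    rcases le_or_gt (b - a) a with hda | hda
    · have mono3 : r (b - a) ≤ r a := hmono md ma hda
      nlinarith [mul_le_mul_of_nonneg_left h1 (by positivity : (0:ℝ) ≤ 2*a),
        mul_nonneg (mul_nonneg hd.le hd.le) (sub_nonneg.2 mono1),
        mul_nonneg (mul_nonneg hd.le (by positivity : (0:ℝ) ≤ 2*a)) (sub_nonneg.2 mono3),
        mul_nonneg (mul_nonneg ha.le hd.le) (sub_nonneg.2 mono2)]
    · have h2 : (r (b - a) - r a) / ((b - a) - a) ≤ (r (a + b) - r (b - a)) / ((a + b) - (b - a)) :=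
        hconv.slope_mono_adjacent ma mc hda (by linarith)
      have e1 : (b - a) - a = b - 2*a := by ring
      have e2 : (a + b) - (b - a) = 2*a := by ring
      rw [e1, e2, div_le_div_iff₀ (by linarith) (by positivity)] at h2
      nlinarith [mul_le_mul_of_nonneg_left h1 (by positivity : (0:ℝ) ≤ 2*a),
        mul_le_mul_of_nonneg_left h2 hd.le,
        mul_nonneg (mul_nonneg hd.le ha.le) (sub_nonneg.2 mono1),
        mul_nonneg (mul_nonneg ha.le hd.le) (sub_nonneg.2 mono2)]
  · intro D hD
    have habs : ∀ x : ℝ, |(-x)| = |x| := fun x => abs_neg x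
    have hmono : MonotoneOn (abs : ℝ → ℝ) (Set.Ioi 0) := by
      intro x hx y hy hxy
      simp only [abs_of_pos (Set.mem_Ioi.1 hx), abs_of_pos (Set.mem_Ioi.1 hy)]
      exact hxy
    have hconv : ConvexOn ℝ (Set.Ioi 0) (abs : ℝ → ℝ) := by
      exact convexOn_norm (convex_Ioi (0:ℝ))
    have h := hD abs continuous_abs habs hmono hconv
    -- first: D > 0, from a = 1/2, b = 1
    have h0 := h (1/2) 1 (by norm_num) (by norm_num)
    rw [show ((1:ℝ)/2 + 1) = 3/2 by norm_num, show ((1:ℝ) - 1/2) = 1/2 by norm_num] at h0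
    rw [abs_of_pos (by norm_num : (0:ℝ) < 3/2), abs_of_pos (by norm_num : (0:ℝ) < 1/2),
      abs_of_pos (by norm_num : (0:ℝ) < 1)] at h0
    norm_num at h0
    by_contra hD1
    push_neg at hD1
    set ε : ℝ := (1 - D) / 2 with hε
    have hε0 : 0 < ε := by simp [hε]; linarith
    have hε1 : ε < 1 := by simp [hε]; nlinarith
    have h' := h ε 1 hε0 hε1
    rw [abs_of_pos (by linarith : (0:ℝ) < ε + 1), abs_of_pos (by linarith : (0:ℝ) < 1 - ε),
      abs_of_pos (by norm_num : (0:ℝ) < 1), abs_of_pos hε0] at h'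
    rw [ge_iff_le] at h'
    have h'' : 1 - ε ≤ D * ((1 - ε^2)) := by
      have e : ((ε + 1) * (ε + 1) - (1 - ε) * (1 - ε)) / (2 * ε)
          - ((ε + 1) * (ε + 1) + (1 - ε) * (1 - ε)) / (2 * 1) = 1 - ε^2 := by
        field_simp
        ring
      calc 1 - ε = 1 * 1 / 1 - ε * ε / ε := by field_simp
        _ ≤ _ := h'
        _ = D * (1 - ε^2) := by rw [e]
      
    nlinarith [h'']
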